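/- For the symmetric bilinear map Θ = Θ_{A,B,C,D,E} on ℂ³, the Ricci tensor Ricci(Y,Z) := tr(X ↦ R(X,Y)Z) satisfies: Ricci(e₁,e₂) = Ricci(e₂,e₁) = (C²+D²)/4; Ricci(e₃,e₁) = Ricci(e₁,e₃) = CE/2; Ricci(e₃,e₂) = Ricci(e₂,e₃) = DE/2; Ricci(e₁,e₁) = (C²+2CD−D²)/4; Ricci(e₂,e₂) = (D²+2CD−C²)/4; Ricci(e₃,e₃) = E²/2 + (A+B)(C+D)/2. -/
import Mathlib


noncomputable section

/-- `ℂ³`. -/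
abbrev V3 : Type := Fin 3 → ℂ

/-- The standard basis of `ℂ³`: `e 0 = e₁ = ∂/∂z₁`, `e 1 = e₂ = ∂/∂z₂`, `e 2 = e₃ = ∂/∂τ`. -/
def e (i : Fin 3) : V3 := Pi.single i 1

/-- The curvature tensor `R(X,Y)Z = Θ(X,Θ(Y,Z)) − Θ(Y,Θ(X,Z))`. -/
def curv (Θ : V3 →ₗ[ℂ] V3 →ₗ[ℂ] V3) (X Y Z : V3) : V3 :=
  Θ X (Θ Y Z) - Θ Y (Θ X Z)

/-- `TrR(X,Y) = tr (Z ↦ R(X,Y)Z)`. -/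
def trR (Θ : V3 →ₗ[ℂ] V3 →ₗ[ℂ] V3) (X Y : V3) : ℂ :=
  LinearMap.trace ℂ V3 ((Θ X) ∘ₗ (Θ Y) - (Θ Y) ∘ₗ (Θ X))

/-- `Ricci(Y,Z) = tr (X ↦ R(X,Y)Z)`. -/
def ricci (Θ : V3 →ₗ[ℂ] V3 →ₗ[ℂ] V3) (Y Z : V3) : ℂ :=
  LinearMap.trace ℂ V3 (Θ.flip (Θ Y Z) - (Θ Y) ∘ₗ (Θ.flip Z))

/-- The projective Weyl tensor in dimension three. -/
def weyl (Θ : V3 →ₗ[ℂ] V3 →ₗ[ℂ] V3) (X Y Z : V3) : V3 :=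
  curv Θ X Y Z - ((1/4 : ℂ) * trR Θ X Y) • Z
    - (1/2 : ℂ) • (ricci Θ Y Z • X - ricci Θ X Z • Y)
    - (1/8 : ℂ) • (trR Θ Y Z • X - trR Θ X Z • Y)


lemma tr3 (f : V3 →ₗ[ℂ] V3) :
    LinearMap.trace ℂ V3 f = f (e 0) 0 + f (e 1) 1 + f (e 2) 2 := by
  rw [LinearMap.trace_eq_matrix_trace ℂ (Pi.basisFun ℂ (Fin 3))]
  simp [Matrix.trace, LinearMap.toMatrix_apply, Fin.sum_univ_three, Matrix.diag, e]

/-- The Ricci tensor of `Θ_{A,B,C,D,E}` on `ℂ³` (`e₁ = e 0`, `e₂ = e 1`, `e₃ = e 2`). -/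
theorem stmt_6 (A B C D E : ℂ)
    (Θ : V3 →ₗ[ℂ] V3 →ₗ[ℂ] V3)
    (hsymm : ∀ x y : V3, Θ x y = Θ y x)
    (h11 : Θ (e 0) (e 0) = C • e 0)
    (h22 : Θ (e 1) (e 1) = D • e 1)
    (h33 : Θ (e 2) (e 2) = A • e 0 + B • e 1 + E • e 2)
    (h12 : Θ (e 0) (e 1) = (C/2) • e 0 + (D/2) • e 1)
    (h13 : Θ (e 0) (e 2) = (E/2) • e 0 + (C/2) • e 2)
    (h23 : Θ (e 1) (e 2) = (E/2) • e 1 + (D/2) • e 2)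
    :
    ricci Θ (e 0) (e 1) = (C^2 + D^2)/4 ∧
    ricci Θ (e 1) (e 0) = (C^2 + D^2)/4 ∧
    ricci Θ (e 2) (e 0) = C*E/2 ∧
    ricci Θ (e 0) (e 2) = C*E/2 ∧
    ricci Θ (e 2) (e 1) = D*E/2 ∧
    ricci Θ (e 1) (e 2) = D*E/2 ∧
    ricci Θ (e 0) (e 0) = (C^2 + 2*C*D - D^2)/4 ∧
    ricci Θ (e 1) (e 1) = (D^2 + 2*C*D - C^2)/4 ∧
    ricci Θ (e 2) (e 2) = E^2/2 + (A+B)*(C+D)/2 := by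

  have h21 := (hsymm (e 1) (e 0)).trans h12
  have h31 := (hsymm (e 2) (e 0)).trans h13
  have h32 := (hsymm (e 2) (e 1)).trans h23
  refine ⟨?_, ?_, ?_, ?_, ?_, ?_, ?_, ?_, ?_⟩ <;>
  · rw [ricci, tr3]
    simp only [LinearMap.sub_apply, LinearMap.comp_apply, LinearMap.flip_apply,
      map_add, map_smul, LinearMap.add_apply, LinearMap.smul_apply,
      h11, h22, h33, h12, h13, h23, h21, h31, h32, map_add, map_smul,
      Pi.sub_apply, Pi.add_apply, Pi.smul_apply, smul_eq_mul]
    simp [e, Pi.single_apply]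
    ring
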